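/- Let W_Γ be an infinite Coxeter group whose outer automorphism group Out(W_Γ) = Aut(W_Γ)/Inn(W_Γ) is finite. Then there exists a subset S ⊆ V such that the special subgroup W_S is infinite and Aut(W_Γ) virtually surjects onto W_S. -/

import Mathlib

open Function Subgroup

namespace CoxeterMatrix

variable {V : Type*}

/-- Two vertices of a Coxeter graph are adjacent iff they are distinct and their Coxeter
matrix entry is nonzero (an entry `0` encodes `∞`, i.e. non-adjacency; entries `≥ 2`
are the edge labels). -/
def Adj (M : CoxeterMatrix V) (v w : V) : Prop := v ≠ w ∧ M v w ≠ 0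

/-- A clique of the Coxeter graph: a set of pairwise adjacent vertices. -/
def IsClique (M : CoxeterMatrix V) (S : Set V) : Prop := S.Pairwise M.Adj

/-- A maximal clique: a clique not properly contained in any other clique. -/
def IsMaxClique (M : CoxeterMatrix V) (S : Set V) : Prop :=
  M.IsClique S ∧ ∀ T, M.IsClique T → S ⊆ T → S = T

/-- The special subgroup `W_S` of the Coxeter group generated by the
simple reflections indexed by `S`. -/
def sp (M : CoxeterMatrix V) (S : Set V) : Subgroup M.Group :=
  Subgroup.closure (M.simple '' S)

/-- A vertex is even if every edge containing it has even label. -/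
def EvenVertex (M : CoxeterMatrix V) (v : V) : Prop :=
  ∀ w, M.Adj v w → Even (M v w)

end CoxeterMatrix

/-- `G` virtually surjects onto `Q` iff some finite-index subgroup of `G`
admits a surjective group homomorphism onto `Q`. -/
def VirtuallySurjectsOnto (G Q : Type*) [Group G] [Group Q] : Prop :=
  ∃ H : Subgroup G, H.FiniteIndex ∧ ∃ φ : H →* Q, Function.Surjective φ

/-- The free product `ℤ/2 * ℤ/2` (the infinite dihedral group). -/
abbrev Z2Z2 := Monoid.Coprod (Multiplicative (ZMod 2)) (Multiplicative (ZMod 2))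


section Stmt14AuxSection
open Function Subgroup List Pointwise

namespace Stmt14Aux

section AbstractGroup

variable {G : Type*} [Group G] (x y : G)

lemma semiconj_invol (hx : x * x = 1) (hy : y * y = 1) :
    SemiconjBy y (x*y) (x*y)⁻¹ := by
  have hxi : x⁻¹ = x := inv_eq_of_mul_eq_one_right hx
  have hyi : y⁻¹ = y := inv_eq_of_mul_eq_one_right hy
  unfold SemiconjBy
  rw [mul_inv_rev, hxi, hyi, mul_assoc]

lemma conj_pow_base (hx : x * x = 1) (hy : y * y = 1) (r : ℕ) :
    ((x*y)^r)⁻¹ * y * (x*y)^r = ((x*y)^(2*r))⁻¹ * y := by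
  have h1 : y * (x*y)^r = ((x*y)^r)⁻¹ * y := by
    have := ((semiconj_invol x y hx hy).pow_right r).eq
    rwa [inv_pow] at this
  rw [mul_assoc, h1, ← mul_assoc, ← mul_inv_rev, ← pow_add]
  congr 2
  ring

lemma conj_alt_even (hx : x * x = 1) (hy : y * y = 1) (r : ℕ) (hm : (x*y)^(2*r) = 1) :
    ((x*y)^r)⁻¹ * y * (x*y)^r = y := by
  rw [conj_pow_base x y hx hy r, hm, inv_one, one_mul]

lemma conj_alt_odd (hx : x * x = 1) (hy : y * y = 1) (r : ℕ) (hm : (x*y)^(2*r+1) = 1) :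
    ((x*y)^r * x)⁻¹ * y * ((x*y)^r * x) = x := by
  have hxi : x⁻¹ = x := inv_eq_of_mul_eq_one_right hx
  have hyi : y⁻¹ = y := inv_eq_of_mul_eq_one_right hy
  have base := conj_pow_base x y hx hy r
  have h2 : ((x*y)^r * x)⁻¹ * y * ((x*y)^r * x)
      = x⁻¹ * (((x*y)^r)⁻¹ * y * (x*y)^r) * x := by group
  rw [h2, base, hxi]
  have hp : y * x = (x*y)⁻¹ := by rw [mul_inv_rev, hxi, hyi]
  calc x * (((x*y)^(2*r))⁻¹ * y) * x = x * (((x*y)^(2*r))⁻¹ * (y * x)) := by group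
  _ = x * (((x*y)^(2*r))⁻¹ * (x*y)⁻¹) := by rw [hp]
  _ = x * ((x*y)^(2*r+1))⁻¹ := by rw [← mul_inv_rev, ← pow_succ']
  _ = x := by rw [hm, inv_one, mul_one]

end AbstractGroup

variable {V : Type*} {M : CoxeterMatrix V}
variable {W : Type*} [Group W] (cs : CoxeterSystem M W)

local prefix:100 "s" => cs.simple
local prefix:100 "π" => cs.wordProd
local prefix:100 "ris" => cs.rightInvSeq

/-- Alternating word of length `n` starting with `a`. -/
def aw (a b : V) : ℕ → List V
  | 0 => []
  | n+1 => a :: aw b a n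

@[simp] lemma aw_zero (a b : V) : aw a b 0 = [] := rfl
lemma aw_succ (a b : V) (n : ℕ) : aw a b (n+1) = a :: aw b a n := rfl

lemma pi_aw_even (a b : V) : ∀ k, π (aw a b (2*k)) = (s a * s b) ^ k := by
  intro k
  induction k with
  | zero => simp
  | succ k ih =>
      have h2 : 2 * (k+1) = (2*k) + 1 + 1 := by ring
      rw [h2, aw_succ, aw_succ, cs.wordProd_cons, cs.wordProd_cons, ih, pow_succ']
      group

lemma pi_aw_odd (a b : V) : ∀ k, π (aw a b (2*k+1)) = (s a * s b) ^ k * s a := by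
  intro k
  induction k with
  | zero => simp [aw_succ]
  | succ k ih =>
      have h2 : 2 * (k+1) + 1 = (2*k+1) + 1 + 1 := by ring
      rw [h2, aw_succ, aw_succ, cs.wordProd_cons, cs.wordProd_cons, ih, pow_succ']
      group

lemma aw_append (n m : ℕ) : ∀ (a b : V), aw a b (m + n) =
    aw a b m ++ (if Even m then aw a b n else aw b a n) := by
  induction m with
  | zero => intro a b; simp
  | succ m ih =>
      intro a b
      have h2 : m + 1 + n = (m + n) + 1 := by ring
      rw [h2, aw_succ, ih b a, aw_succ]
      by_cases hm : Even m
      · simp [hm, Nat.even_add_one]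
      · simp [hm, Nat.even_add_one]

lemma drop_aw (k : ℕ) : ∀ (a b : V) (n : ℕ), List.drop k (aw a b n) =
    if Even k then aw a b (n - k) else aw b a (n - k) := by
  induction k with
  | zero => intro a b n; simp
  | succ k ih =>
      intro a b n
      match n with
      | 0 => simp
      | n+1 =>
          rw [aw_succ, List.drop_succ_cons, ih b a n]
          have : n + 1 - (k + 1) = n - k := by omega
          rw [this]
          by_cases hk : Even k
          · simp [hk, Nat.even_add_one]
          · simp [hk, Nat.even_add_one]

lemma get?_aw (k : ℕ) : ∀ (a b : V) (n : ℕ), k < n →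
    (aw a b n)[k]? = some (if Even k then a else b) := by
  induction k with
  | zero =>
      intro a b n hn
      match n with
      | n+1 => simp [aw_succ]
  | succ k ih =>
      intro a b n hn
      match n with
      | n+1 =>
          rw [aw_succ]
          have := ih b a n (by omega)
          simp only [List.getElem?_cons_succ, this, Nat.even_add_one]
          by_cases hk : Even k <;> simp [hk]

/-- Conjugating `s d` by the product of the alternating word `aw c d m`. -/
lemma q_conj (c d : V) (m : ℕ) (h : (s c * s d) ^ m = 1) :
    (π (aw c d m))⁻¹ * s d * π (aw c d m) = if Even m then s d else s c := by
  have hx : s c * s c = 1 := cs.simple_mul_simple_self c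
  have hy : s d * s d = 1 := cs.simple_mul_simple_self d
  rcases Nat.even_or_odd m with he | ho
  · obtain ⟨r, hr⟩ := he
    have hm : m = 2 * r := by omega
    subst hm
    rw [pi_aw_even, if_pos ⟨r, by ring⟩]
    exact conj_alt_even _ _ hx hy r h
  · obtain ⟨r, hr⟩ := ho
    subst hr
    rw [pi_aw_odd, if_neg (by simp [Nat.even_add_one, parity_simps])]
    exact conj_alt_odd _ _ hx hy r h

attribute [local instance] Classical.propDecidable



lemma conj_eq_simple_iff (i : V) (t : W) :
    s i * t * s i = s i ↔ t = s i := by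
  constructor
  · intro h
    have h2 : s i * t * s i = s i * s i * s i := by
      rw [h, cs.simple_mul_simple_self, one_mul]
    exact mul_left_cancel (mul_right_cancel h2)
  · rintro rfl
    rw [cs.simple_mul_simple_self, one_mul]

lemma sig_invol (i : V) : Function.Involutive
    (fun p : W × ℤˣ => (s i * p.1 * s i, if p.1 = s i then -p.2 else p.2)) := by
  rintro ⟨t, ε⟩
  have hss : s i * s i = 1 := cs.simple_mul_simple_self i
  have h1 : s i * (s i * t * s i) * s i = t := by
    calc s i * (s i * t * s i) * s i = (s i * s i) * t * (s i * s i) := by group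
    _ = t := by rw [hss, one_mul, mul_one]
  have h2 : (s i * t * s i = s i) ↔ t = s i := conj_eq_simple_iff cs i t
  by_cases h : t = s i
  · simp [h, h2, h1]
  · simp [h, h2, h1]

/-- The sign permutation associated to the simple reflection `i`. -/
noncomputable def sig (i : V) : Equiv.Perm (W × ℤˣ) :=
  Function.Involutive.toPerm _ (sig_invol cs i)

lemma sig_apply (i : V) (t : W) (ε : ℤˣ) :
    sig cs i (t, ε) = (s i * t * s i, if t = s i then -ε else ε) := rfl

/-- The composite of the sign permutations along a word. -/
noncomputable def cMap (ω : List V) : Equiv.Perm (W × ℤˣ) :=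
  (ω.map (fun i => sig cs i)).prod

@[simp] lemma cMap_nil : cMap cs ([] : List V) = 1 := rfl
lemma cMap_cons (i : V) (ω : List V) : cMap cs (i :: ω) = sig cs i * cMap cs ω := by
  simp [cMap]

lemma ris_cons (i : V) (ω : List V) :
    ris (i :: ω) = ((π ω)⁻¹ * s i * π ω) :: ris ω := rfl

lemma cMap_apply (ω : List V) (t : W) (ε : ℤˣ) :
    cMap cs ω (t, ε) = (π ω * t * (π ω)⁻¹,
      if Even ((ris ω).count t) then ε else -ε) := by
  induction ω generalizing ε with
  | nil => simp
  | cons i ω ih =>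
      rw [cMap_cons, Equiv.Perm.mul_apply, ih, sig_apply]
      have hfst : s i * (π ω * t * (π ω)⁻¹) * s i
          = π (i :: ω) * t * (π (i :: ω))⁻¹ := by
        rw [cs.wordProd_cons, mul_inv_rev, cs.inv_simple]
        group
      have hcond : (π ω * t * (π ω)⁻¹ = s i) ↔ t = (π ω)⁻¹ * s i * π ω := by
        constructor
        · intro h; rw [← h]; group
        · intro h; rw [h]; group
      have hcount : (ris (i :: ω)).count t
          = (ris ω).count t + (if t = (π ω)⁻¹ * s i * π ω then 1 else 0) := by
        rw [ris_cons, List.count_cons]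
        by_cases h : t = (π ω)⁻¹ * s i * π ω
        · simp [h]
        · have h' : ¬ ((π ω)⁻¹ * s i * π ω = t) := fun hh => h hh.symm
          simp [h, h']
      rw [hfst, hcond, hcount]
      by_cases h1 : t = (π ω)⁻¹ * s i * π ω
      · rw [if_pos h1, if_pos h1]
        by_cases h2 : Even ((ris ω).count t)
        · have h3 : ¬ Even ((ris ω).count t + 1) := by simp [Nat.even_add_one, h2]
          rw [if_pos h2, if_neg h3]
        · have h3 : Even ((ris ω).count t + 1) := by simp [Nat.even_add_one, h2]
          rw [if_neg h2, if_pos h3, neg_neg]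
      · rw [if_neg h1, if_neg h1, add_zero]

lemma aw_two_succ (a b : V) (n : ℕ) : aw a b (n+2) = a :: b :: aw a b n := rfl

lemma cMap_aw_pow (a b : V) : ∀ m : ℕ,
    cMap cs (aw a b (2*m)) = (sig cs a * sig cs b) ^ m := by
  intro m
  induction m with
  | zero => simp
  | succ m ih =>
      have h2 : 2 * (m+1) = 2*m + 2 := by ring
      rw [h2, aw_two_succ, cMap_cons, cMap_cons, ih, pow_succ']
      rw [mul_assoc]


lemma aw_length (a b : V) : ∀ n, (aw a b n).length = n := by
  intro n
  induction n generalizing a b with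
  | zero => rfl
  | succ n ih => rw [aw_succ]; simp [ih]

lemma ris_aw_period (i j : V) (m : ℕ)
    (hrel : (s i * s j) ^ m = 1) (hrel' : (s j * s i) ^ m = 1)
    (k : ℕ) (hk : k < m) :
    (ris (aw i j (2*m))).getD (k+m) 1 = (ris (aw i j (2*m))).getD k 1 := by
  rw [cs.getD_rightInvSeq, cs.getD_rightInvSeq]
  rw [get?_aw _ _ _ _ (by omega), get?_aw _ _ _ _ (by omega)]
  rw [drop_aw, drop_aw]
  have e1 : 2*m - (k+1) = m + (m-k-1) := by omega
  have e2 : 2*m - (k+m+1) = m-k-1 := by omega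
  rw [e1, e2]
  simp only [Option.map_some, Option.getD_some]
  rcases Nat.even_or_odd k with hke | hko
  · have hk2 : k % 2 = 0 := Nat.even_iff.mp hke
    have hk1 : ¬ Even (k+1) := by rw [Nat.even_iff]; omega
    rcases Nat.even_or_odd m with hme | hmo
    · have hm2 : m % 2 = 0 := Nat.even_iff.mp hme
      have hkm : Even (k+m) := by rw [Nat.even_iff]; omega
      have hkm1 : ¬ Even (k+m+1) := by rw [Nat.even_iff]; omega
      rw [if_pos hke, if_pos hkm, if_neg hk1, if_neg hkm1]
      rw [aw_append, if_pos hme, cs.wordProd_append]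
      have hq := q_conj cs j i m hrel'
      rw [if_pos hme] at hq
      calc (π (aw j i (m-k-1)))⁻¹ * s i * π (aw j i (m-k-1))
          = (π (aw j i (m-k-1)))⁻¹ * ((π (aw j i m))⁻¹ * s i * π (aw j i m))
              * π (aw j i (m-k-1)) := by rw [hq]
      _ = (π (aw j i m) * π (aw j i (m-k-1)))⁻¹ * s i
              * (π (aw j i m) * π (aw j i (m-k-1))) := by group
    · have hm2 : m % 2 = 1 := Nat.odd_iff.mp hmo
      have hme : ¬ Even m := by rw [Nat.even_iff]; omega
      have hkm : ¬ Even (k+m) := by rw [Nat.even_iff]; omega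
      have hkm1 : Even (k+m+1) := by rw [Nat.even_iff]; omega
      rw [if_pos hke, if_neg hkm, if_neg hk1, if_pos hkm1]
      rw [aw_append, if_neg hme, cs.wordProd_append]
      have hq := q_conj cs j i m hrel'
      rw [if_neg hme] at hq
      calc (π (aw i j (m-k-1)))⁻¹ * s j * π (aw i j (m-k-1))
          = (π (aw i j (m-k-1)))⁻¹ * ((π (aw j i m))⁻¹ * s i * π (aw j i m))
              * π (aw i j (m-k-1)) := by rw [hq]
      _ = (π (aw j i m) * π (aw i j (m-k-1)))⁻¹ * s i
              * (π (aw j i m) * π (aw i j (m-k-1))) := by group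
  · have hk2 : k % 2 = 1 := Nat.odd_iff.mp hko
    have hke : ¬ Even k := by rw [Nat.even_iff]; omega
    have hk1 : Even (k+1) := by rw [Nat.even_iff]; omega
    rcases Nat.even_or_odd m with hme | hmo
    · have hm2 : m % 2 = 0 := Nat.even_iff.mp hme
      have hkm : ¬ Even (k+m) := by rw [Nat.even_iff]; omega
      have hkm1 : Even (k+m+1) := by rw [Nat.even_iff]; omega
      rw [if_neg hke, if_neg hkm, if_pos hk1, if_pos hkm1]
      rw [aw_append, if_pos hme, cs.wordProd_append]
      have hq := q_conj cs i j m hrel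
      rw [if_pos hme] at hq
      calc (π (aw i j (m-k-1)))⁻¹ * s j * π (aw i j (m-k-1))
          = (π (aw i j (m-k-1)))⁻¹ * ((π (aw i j m))⁻¹ * s j * π (aw i j m))
              * π (aw i j (m-k-1)) := by rw [hq]
      _ = (π (aw i j m) * π (aw i j (m-k-1)))⁻¹ * s j
              * (π (aw i j m) * π (aw i j (m-k-1))) := by group
    · have hm2 : m % 2 = 1 := Nat.odd_iff.mp hmo
      have hme : ¬ Even m := by rw [Nat.even_iff]; omega
      have hkm : Even (k+m) := by rw [Nat.even_iff]; omega
      have hkm1 : ¬ Even (k+m+1) := by rw [Nat.even_iff]; omega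
      rw [if_neg hke, if_pos hkm, if_pos hk1, if_neg hkm1]
      rw [aw_append, if_neg hme, cs.wordProd_append]
      have hq := q_conj cs i j m hrel
      rw [if_neg hme] at hq
      calc (π (aw j i (m-k-1)))⁻¹ * s i * π (aw j i (m-k-1))
          = (π (aw j i (m-k-1)))⁻¹ * ((π (aw i j m))⁻¹ * s j * π (aw i j m))
              * π (aw j i (m-k-1)) := by rw [hq]
      _ = (π (aw i j m) * π (aw j i (m-k-1)))⁻¹ * s j
              * (π (aw i j m) * π (aw j i (m-k-1))) := by group

lemma ris_aw_double (i j : V) (m : ℕ)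
    (hrel : (s i * s j) ^ m = 1) (hrel' : (s j * s i) ^ m = 1) :
    ris (aw i j (2*m)) =
      (ris (aw i j (2*m))).take m ++ (ris (aw i j (2*m))).take m := by
  set L := ris (aw i j (2*m)) with hL
  have hlen : L.length = 2*m := by rw [hL, cs.length_rightInvSeq, aw_length]
  have hlt : (L.take m).length = m := by rw [List.length_take, hlen]; omega
  apply List.ext_getElem
  · rw [List.length_append, hlt, hlen]; omega
  · intro n h1 h2
    by_cases hn : n < m
    · rw [List.getElem_append_left (by omega), List.getElem_take]
    · have h3 : n - m < m := by rw [hlen] at h1; omega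
      rw [List.getElem_append_right (by omega)]
      simp only [hlt]
      rw [List.getElem_take]
      have hper := ris_aw_period cs i j m hrel hrel' (n-m) h3
      have e : n - m + m = n := by omega
      rw [e] at hper
      rw [← List.getD_eq_getElem L 1, ← List.getD_eq_getElem L 1]
      exact hper

lemma count_ris_aw_even (i j : V) (m : ℕ)
    (hrel : (s i * s j) ^ m = 1) (hrel' : (s j * s i) ^ m = 1) (t : W) :
    Even ((ris (aw i j (2*m))).count t) := by
  rw [ris_aw_double cs i j m hrel hrel', List.count_append]
  exact ⟨_, rfl⟩

lemma sig_liftable : M.IsLiftable (fun v => sig cs v) := by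
  intro i j
  have hrel := cs.simple_mul_simple_pow i j
  have hrel' := cs.simple_mul_simple_pow' i j
  rw [← cMap_aw_pow]
  apply Equiv.ext
  rintro ⟨t, ε⟩
  rw [cMap_apply]
  have hπ : π (aw i j (2 * M i j)) = 1 := by rw [pi_aw_even]; exact hrel
  have hc := count_ris_aw_even cs i j (M i j) hrel hrel' t
  rw [hπ, if_pos hc]
  simp

/-- The sign homomorphism package. -/
noncomputable def P : W →* Equiv.Perm (W × ℤˣ) :=
  cs.lift ⟨fun v => sig cs v, sig_liftable cs⟩

lemma P_simple (v : V) : P cs (s v) = sig cs v := cs.lift_apply_simple _ v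

lemma P_pi (ω : List V) : P cs (π ω) = cMap cs ω := by
  unfold CoxeterSystem.wordProd
  rw [MonoidHom.map_list_prod, List.map_map]
  unfold cMap
  congr 1
  apply List.map_congr_left
  intro v _
  exact P_simple cs v

/-- The sign cocycle. -/
noncomputable def eta (w t : W) : ℤˣ := ((P cs w) (t, 1)).2

lemma eta_count (ω : List V) (t : W) :
    eta cs (π ω) t = if Even ((ris ω).count t) then 1 else -1 := by
  unfold eta
  rw [P_pi, cMap_apply]

lemma P_apply (w t : W) (ε : ℤˣ) :
    P cs w (t, ε) = (w * t * w⁻¹, ε * eta cs w t) := by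
  obtain ⟨ω, rfl⟩ := cs.wordProd_surjective w
  rw [P_pi, cMap_apply, eta_count]
  by_cases h : Even ((ris ω).count t)
  · rw [if_pos h, if_pos h, mul_one]
  · rw [if_neg h, if_neg h, mul_neg_one]

lemma eta_conj (z u t : W) (hzu : z * u = u * z) (hzt : z * t = t * z) :
    eta cs z (u * t * u⁻¹) = eta cs z t := by
  have h1 : P cs (z * u) (t, 1) = P cs (u * z) (t, 1) := by rw [hzu]
  rw [map_mul, map_mul, Equiv.Perm.mul_apply, Equiv.Perm.mul_apply,
    P_apply, P_apply, P_apply, P_apply] at h1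
  have hz : z * t * z⁻¹ = t := by rw [hzt]; group
  rw [hz] at h1
  have h2 := congrArg Prod.snd h1
  simp only [one_mul] at h2
  have h3 : eta cs u t * eta cs z (u * t * u⁻¹) = eta cs u t * eta cs z t := by
    rw [h2]; exact mul_comm _ _
  exact mul_left_cancel h3


lemma ris_mem_conj (ω : List V) (t : W) (ht : t ∈ ris ω) :
    ∃ (u : W) (v : V), t = u⁻¹ * s v * u := by
  induction ω with
  | nil => simp at ht
  | cons i ω ih =>
      rw [ris_cons] at ht
      rcases List.mem_cons.mp ht with h | h
      · exact ⟨π ω, i, h⟩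
      · exact ih h

lemma central_ris_class_finite (z : W) (hz : ∀ g, z * g = g * z) (ω : List V)
    (hω : cs.IsReduced ω) (hzω : z = π ω) (t : W) (ht : t ∈ ris ω) :
    {x : W | IsConj t x}.Finite := by
  have hcount1 : (ris ω).count t = 1 := by
    have hnd : (ris ω).Nodup := hω.nodup_rightInvSeq
    have h1 := List.nodup_iff_count_le_one.mp hnd t
    have h2 : 0 < (ris ω).count t := List.count_pos_iff.mpr ht
    omega
  have hsub : {x : W | IsConj t x} ⊆ {x : W | x ∈ ris ω} := by
    intro x hx
    obtain ⟨c, hc⟩ := isConj_iff.mp hx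
    have hex : eta cs z x = -1 := by
      rw [← hc, eta_conj cs z c t (hz c) (hz t), hzω, eta_count, hcount1]
      norm_num
    have hne : (ris ω).count x ≠ 0 := by
      intro h0
      rw [hzω, eta_count, h0] at hex
      norm_num at hex
    exact List.count_pos_iff.mp (Nat.pos_of_ne_zero hne)
  exact (List.finite_toSet (ris ω)).subset hsub

lemma isConj_simple_of_odd (v w : V) (hodd : Odd (M v w)) :
    IsConj (s v) (s w) := by
  obtain ⟨k, hk⟩ := hodd
  have hrel : (s v * s w) ^ (2*k+1) = 1 := by
    rw [← hk]; exact cs.simple_mul_simple_pow v w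
  rw [isConj_iff]
  refine ⟨(s v * s w)^k, ?_⟩
  set a := s v * s w with ha
  have hsc : SemiconjBy (s v) a a⁻¹ := by
    unfold SemiconjBy
    rw [ha, mul_inv_rev, cs.inv_simple, cs.inv_simple]
    calc s v * (s v * s w) = (s v * s v) * s w := by group
    _ = s w := by rw [cs.simple_mul_simple_self, one_mul]
    _ = s w * (s v * s v) := by rw [cs.simple_mul_simple_self, mul_one]
    _ = s w * s v * s v := by group
  have k1 : s v * a^k = (a^k)⁻¹ * s v := by
    have := (hsc.pow_right k).eq
    rwa [inv_pow] at this
  have h2r : a^k * a^k = a⁻¹ := by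
    apply eq_inv_of_mul_eq_one_left
    calc a^k * a^k * a = a^(2*k+1) := by rw [← pow_add, ← pow_succ]; congr 1; ring
    _ = 1 := hrel
  calc a^k * s v * (a^k)⁻¹ = a^k * (s v * a^k) * (a^k)⁻¹ * (a^k)⁻¹ := by group
  _ = a^k * ((a^k)⁻¹ * s v) * (a^k)⁻¹ * (a^k)⁻¹ := by rw [k1]
  _ = s v * (a^k * a^k)⁻¹ := by group
  _ = s v * a := by rw [h2r, inv_inv]
  _ = s w := by
      rw [ha, ← mul_assoc, cs.simple_mul_simple_self, one_mul]

section Dietzmann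

variable {G : Type*} [Group G]

lemma prod_conj_map (x : G) (l : List G) :
    (l.map (fun y => x * y * x⁻¹)).prod = x * l.prod * x⁻¹ := by
  induction l with
  | nil => simp
  | cons a l ih =>
      rw [List.map_cons, List.prod_cons, List.prod_cons, ih]
      group

lemma not_nodup_split {α : Type*} (l : List α) (h : ¬ l.Nodup) :
    ∃ (x : α) (l₁ l₂ l₃ : List α), l = l₁ ++ x :: (l₂ ++ x :: l₃) := by
  induction l with
  | nil => simp at h
  | cons a t ih =>
      by_cases ha : a ∈ t
      · obtain ⟨s', t', rfl⟩ := List.append_of_mem ha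
        exact ⟨a, [], s', t', rfl⟩
      · have h' : ¬ t.Nodup := by
          intro hnd
          exact h (List.nodup_cons.mpr ⟨ha, hnd⟩)
        obtain ⟨x, l₁, l₂, l₃, rfl⟩ := ih h'
        exact ⟨x, a :: l₁, l₂, l₃, rfl⟩

lemma dietzmann_reduce (X : Set G) (hinvol : ∀ x ∈ X, x * x = 1)
    (hconj : ∀ g : G, ∀ x ∈ X, g * x * g⁻¹ ∈ X) (N : ℕ)
    (hcard : ∀ l : List G, (∀ x ∈ l, x ∈ X) → l.Nodup → l.length ≤ N) :
    ∀ (n : ℕ) (l : List G), l.length ≤ n → (∀ x ∈ l, x ∈ X) →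
      ∃ l' : List G, (∀ x ∈ l', x ∈ X) ∧ l'.length ≤ N ∧ l'.prod = l.prod := by
  intro n
  induction n with
  | zero =>
      intro l hlen hX
      exact ⟨l, hX, by omega, rfl⟩
  | succ n ih =>
      intro l hlen hX
      by_cases hN : l.length ≤ N
      · exact ⟨l, hX, hN, rfl⟩
      · have hnd : ¬ l.Nodup := fun hnd => hN (hcard l hX hnd)
        obtain ⟨x, l₁, l₂, l₃, rfl⟩ := not_nodup_split l hnd
        have hxX : x ∈ X := hX x (by simp)
        have hxi : x⁻¹ = x := inv_eq_of_mul_eq_one_right (hinvol x hxX)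
        set l' := l₁ ++ ((l₂.map (fun y => x * y * x⁻¹)) ++ l₃) with hl'
        have hX' : ∀ y ∈ l', y ∈ X := by
          intro y hy
          rw [hl'] at hy
          simp only [List.mem_append, List.mem_map] at hy
          rcases hy with h | h | h
          · exact hX y (by simp [h])
          · obtain ⟨b, hb, rfl⟩ := h
            exact hconj x b (hX b (by simp [hb]))
          · exact hX y (by simp [h])
        have hlen' : l'.length ≤ n := by
          rw [hl']
          simp only [List.length_append, List.length_map, List.length_cons] at hlen ⊢
          omega
        have hprod : l'.prod = (l₁ ++ x :: (l₂ ++ x :: l₃)).prod := by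
          rw [hl']
          simp only [List.prod_append, List.prod_cons]
          rw [prod_conj_map, hxi]
          group
        obtain ⟨l'', h1, h2, h3⟩ := ih l' hlen' hX'
        exact ⟨l'', h1, h2, h3.trans hprod⟩

lemma dietzmann (X : Set G) (hfin : X.Finite) (hinvol : ∀ x ∈ X, x * x = 1)
    (hconj : ∀ g : G, ∀ x ∈ X, g * x * g⁻¹ ∈ X) :
    ((Subgroup.closure X : Subgroup G) : Set G).Finite := by
  classical
  set N := hfin.toFinset.card with hN
  have hcard : ∀ l : List G, (∀ x ∈ l, x ∈ X) → l.Nodup → l.length ≤ N := by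
    intro l hl hnd
    have hsub : l.toFinset ⊆ hfin.toFinset := by
      intro a ha
      rw [List.mem_toFinset] at ha
      exact hfin.mem_toFinset.mpr (hl a ha)
    calc l.length = l.toFinset.card := (List.toFinset_card_of_nodup hnd).symm
    _ ≤ N := Finset.card_le_card hsub
  have hlists : ∀ n : ℕ, {l : List G | (∀ x ∈ l, x ∈ X) ∧ l.length ≤ n}.Finite := by
    intro n
    induction n with
    | zero =>
        apply Set.Finite.subset (Set.finite_singleton ([] : List G))
        rintro l ⟨-, hl⟩
        simp [List.length_eq_zero_iff.mp (Nat.le_zero.mp hl)]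
    | succ n ih =>
        apply Set.Finite.subset
          ((Set.finite_singleton ([] : List G)).union
            (Set.Finite.image2 (fun a l => a :: l) hfin ih))
        rintro l ⟨hX, hlen⟩
        match l with
        | [] => exact Or.inl rfl
        | a :: t =>
            right
            refine Set.mem_image2_of_mem (hX a (by simp)) ?_
            refine ⟨fun x hx => hX x (by simp [hx]), ?_⟩
            simp at hlen
            omega
  have hsub : ((Subgroup.closure X : Subgroup G) : Set G) ⊆
      (fun l : List G => l.prod) '' {l | (∀ x ∈ l, x ∈ X) ∧ l.length ≤ N} := by
    intro g hg
    have hg' : g ∈ Submonoid.closure (X ∪ X⁻¹) := by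
      rw [← Subgroup.closure_toSubmonoid]
      exact hg
    obtain ⟨l, hl, rfl⟩ := Submonoid.exists_list_of_mem_closure hg'
    have hlX : ∀ x ∈ l, x ∈ X := by
      intro x hx
      rcases hl x hx with h | h
      · exact h
      · rw [Set.mem_inv] at h
        have hxx := hinvol _ h
        have h2 : (x⁻¹)⁻¹ = x⁻¹ := inv_eq_of_mul_eq_one_right hxx
        rw [inv_inv] at h2
        rw [h2]; exact h
    obtain ⟨l', h1, h2, h3⟩ :=
      dietzmann_reduce X hinvol hconj N hcard l.length l le_rfl hlX
    exact ⟨l', ⟨h1, h2⟩, h3⟩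
  exact Set.Finite.subset ((hlists N).image _) hsub

end Dietzmann


end Stmt14Aux

open CoxeterMatrix in
theorem stmt14' {V : Type*} [Fintype V] (M : CoxeterMatrix V)
    (hinf : Infinite M.Group)
    (hout : (MulAut.conj : M.Group →* MulAut M.Group).range.FiniteIndex) :
    ∃ S : Set V, Infinite ↥(Subgroup.closure (M.simple '' S)) ∧
      ∃ H : Subgroup (MulAut M.Group), H.FiniteIndex ∧
        ∃ φ : H →* ↥(Subgroup.closure (M.simple '' S)), Function.Surjective φ := by
  classical
  open Stmt14Aux in
  set cs := M.toCoxeterSystem with hcs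
  have hsimp : cs.simple = M.simple := rfl
  -- conjugacy classes of simple reflections
  set Cl : V → Set M.Group := fun v => {x | IsConj (cs.simple v) x} with hCl
  set S : Set V := {v | (Cl v).Infinite} with hS
  set spS : Subgroup M.Group := Subgroup.closure (M.simple '' S) with hspS
  -- the retraction killing the simple reflections outside S
  set g : V → M.Group := fun v => if v ∈ S then cs.simple v else 1 with hg
  have hCl_eq : ∀ v w : V, IsConj (cs.simple v) (cs.simple w) → Cl v = Cl w := by
    intro v w h
    ext x
    exact ⟨fun hx => h.symm.trans hx, fun hx => h.trans hx⟩
  have hglift : M.IsLiftable g := by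
    intro i j
    by_cases hi : i ∈ S <;> by_cases hj : j ∈ S
    · simp only [hg, if_pos hi, if_pos hj]
      exact cs.simple_mul_simple_pow i j
    · -- j ∉ S : entry must be even (or we contradict)
      simp only [hg, if_pos hi, if_neg hj, mul_one]
      rcases Nat.even_or_odd (M i j) with he | ho
      · obtain ⟨r, hr⟩ := he
        rw [hr, ← two_mul, pow_mul, cs.simple_sq, one_pow]
      · exfalso
        have hconj := Stmt14Aux.isConj_simple_of_odd cs i j ho
        apply hj
        show (Cl j).Infinite
        rw [← hCl_eq i j hconj]
        exact hi
    · simp only [hg, if_neg hi, if_pos hj, one_mul]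
      rcases Nat.even_or_odd (M i j) with he | ho
      · obtain ⟨r, hr⟩ := he
        rw [hr, ← two_mul, pow_mul, cs.simple_sq, one_pow]
      · exfalso
        have hconj := Stmt14Aux.isConj_simple_of_odd cs i j ho
        apply hi
        show (Cl i).Infinite
        rw [hCl_eq i j hconj]
        exact hj
    · simp only [hg, if_neg hi, if_neg hj, one_mul, one_pow]
  set r : M.Group →* M.Group := cs.lift ⟨g, hglift⟩ with hr
  have hr_simple : ∀ v : V, r (cs.simple v) = g v := fun v => cs.lift_apply_simple hglift v
  -- r maps into spS
  have hmem : ∀ w : M.Group, r w ∈ spS := by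
    intro w
    obtain ⟨ω, rfl⟩ := cs.wordProd_surjective w
    induction ω with
    | nil => rw [cs.wordProd_nil, map_one]; exact one_mem _
    | cons i ω ih =>
        rw [cs.wordProd_cons, map_mul]
        refine mul_mem ?_ ih
        rw [hr_simple]
        by_cases hi : i ∈ S
        · rw [hg]; simp only [if_pos hi]
          exact Subgroup.subset_closure ⟨i, hi, rfl⟩
        · rw [hg]; simp only [if_neg hi]
          exact one_mem _
  -- r fixes spS pointwise
  have hfix : ∀ x ∈ spS, r x = x := by
    intro x hx
    induction hx using Subgroup.closure_induction with
    | mem y hy =>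
        obtain ⟨v, hv, rfl⟩ := hy
        have : r (cs.simple v) = cs.simple v := by
          rw [hr_simple, hg]; simp only [if_pos hv]
        exact this
    | one => exact map_one r
    | mul a b _ _ ha hb => rw [map_mul, ha, hb]
    | inv a _ ha => rw [map_inv, ha]
  -- r kills the center
  have hker : ∀ z : M.Group, (∀ w, z * w = w * z) → r z = 1 := by
    intro z hz
    obtain ⟨ω, hred, hzω⟩ := cs.exists_reduced_word' z
    have hkill : ∀ t ∈ cs.rightInvSeq ω, r t = 1 := by
      intro t ht
      obtain ⟨u, v, htuv⟩ := Stmt14Aux.ris_mem_conj cs ω t ht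
      have hconjvt : IsConj (cs.simple v) t := by
        rw [isConj_iff]
        exact ⟨u⁻¹, by rw [htuv]; group⟩
      have hfin : (Cl v).Finite := by
        have hclt := Stmt14Aux.central_ris_class_finite cs z hz ω hred hzω t ht
        have : Cl v = {x | IsConj t x} := by
          ext x
          exact ⟨fun hx => hconjvt.symm.trans hx, fun hx => hconjvt.trans hx⟩
        rw [this]; exact hclt
      have hvS : v ∉ S := fun hv => hv hfin
      rw [htuv, map_mul, map_mul, map_inv, hr_simple, hg]
      simp only [if_neg hvS]
      group
    have hrinv : r z⁻¹ = 1 := by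
      have hzinv : z⁻¹ = (cs.rightInvSeq ω).prod := by
        rw [cs.prod_rightInvSeq, hzω]
      rw [hzinv, MonoidHom.map_list_prod]
      apply List.prod_eq_one
      intro x hx
      simp only [List.mem_map] at hx
      obtain ⟨t, ht, rfl⟩ := hx
      exact hkill t ht
    calc r z = (r z⁻¹)⁻¹ := by rw [map_inv, inv_inv]
    _ = 1 := by rw [hrinv, inv_one]
  -- spS is infinite
  have hinfS : Infinite spS := by
    by_contra hcon
    have hfinS : Finite spS := not_infinite_iff_finite.mp hcon
    have hfinsetS : (spS : Set M.Group).Finite := Set.finite_coe_iff.mp hfinS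
    set X : Set M.Group := ⋃ v ∈ {v : V | v ∉ S}, Cl v with hX
    have hXfin : X.Finite := by
      apply Set.Finite.biUnion (Set.toFinite _)
      intro v hv
      exact Set.not_infinite.mp hv
    have hXinvol : ∀ x ∈ X, x * x = 1 := by
      intro x hx
      simp only [hX, Set.mem_iUnion] at hx
      obtain ⟨v, hv, hxv⟩ := hx
      obtain ⟨c, hc⟩ := isConj_iff.mp hxv
      rw [← hc]
      have hss := cs.simple_mul_simple_self v
      calc c * cs.simple v * c⁻¹ * (c * cs.simple v * c⁻¹)
          = c * (cs.simple v * cs.simple v) * c⁻¹ := by group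
      _ = 1 := by rw [hss, mul_one, mul_inv_cancel]
    have hXconj : ∀ w : M.Group, ∀ x ∈ X, w * x * w⁻¹ ∈ X := by
      intro w x hx
      simp only [hX, Set.mem_iUnion] at hx ⊢
      obtain ⟨v, hv, hxv⟩ := hx
      exact ⟨v, hv, hxv.trans (isConj_iff.mpr ⟨w, rfl⟩)⟩
    set A : Subgroup M.Group := Subgroup.closure X with hA
    have hAfin : (A : Set M.Group).Finite :=
      Stmt14Aux.dietzmann X hXfin hXinvol hXconj
    have hAnormal : A.Normal := by
      constructor
      intro a ha w
      induction ha using Subgroup.closure_induction with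
      | mem y hy => exact Subgroup.subset_closure (hXconj w y hy)
      | one => simpa using one_mem A
      | mul b c _ _ hb hc =>
          have : w * (b * c) * w⁻¹ = (w * b * w⁻¹) * (w * c * w⁻¹) := by group
          rw [this]; exact mul_mem hb hc
      | inv b _ hb =>
          have : w * b⁻¹ * w⁻¹ = (w * b * w⁻¹)⁻¹ := by group
          rw [this]; exact inv_mem hb
    have htop : ∀ w : M.Group, w ∈ A ⊔ spS := by
      intro w
      have h1 : Subgroup.closure (Set.range cs.simple) = ⊤ :=
        cs.subgroup_closure_range_simple
      have h2 : Set.range cs.simple ⊆ ((A ⊔ spS : Subgroup M.Group) : Set M.Group) := by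
        rintro x ⟨v, rfl⟩
        by_cases hv : v ∈ S
        · exact Subgroup.mem_sup_right (Subgroup.subset_closure ⟨v, hv, rfl⟩)
        · refine Subgroup.mem_sup_left (Subgroup.subset_closure ?_)
          simp only [hX, Set.mem_iUnion]
          exact ⟨v, hv, IsConj.refl _⟩
      have h3 : Subgroup.closure (Set.range cs.simple) ≤ A ⊔ spS :=
        (Subgroup.closure_le _).mpr h2
      exact h3 (h1 ▸ Subgroup.mem_top w)
    have hmulset : ((A ⊔ spS : Subgroup M.Group) : Set M.Group)
        = (A : Set M.Group) * (spS : Set M.Group) :=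
      Subgroup.normal_mul A spS
    have hfintop : ((A ⊔ spS : Subgroup M.Group) : Set M.Group).Finite := by
      rw [hmulset]
      exact Set.Finite.mul hAfin hfinsetS
    have huniv : (Set.univ : Set M.Group).Finite :=
      hfintop.subset (fun w _ => htop w)
    exact Set.infinite_univ huniv
  -- assemble the virtual surjection
  refine ⟨S, hinfS, (MulAut.conj : M.Group →* MulAut M.Group).range, hout, ?_⟩
  set q : M.Group →* spS := r.codRestrict spS hmem with hq
  have hqsurj : Function.Surjective q := by
    rintro ⟨x, hx⟩
    exact ⟨x, Subtype.ext (hfix x hx)⟩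
  have hconjker : (MulAut.conj : M.Group →* MulAut M.Group).ker ≤ q.ker := by
    intro x hx
    rw [MonoidHom.mem_ker] at hx ⊢
    have hc : ∀ w : M.Group, x * w = w * x := by
      intro w
      have h1 : (MulAut.conj x) w = w := by rw [hx]; rfl
      rw [MulAut.conj_apply] at h1
      calc x * w = x * w * x⁻¹ * x := by group
      _ = w * x := by rw [h1]
    apply Subtype.ext
    exact hker x hc
  set φ₀ : M.Group ⧸ (MulAut.conj : M.Group →* MulAut M.Group).ker →* spS :=
    QuotientGroup.lift _ q hconjker with hφ₀
  set e := QuotientGroup.quotientKerEquivRange (MulAut.conj : M.Group →* MulAut M.Group) with he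
  refine ⟨φ₀.comp e.symm.toMonoidHom, ?_⟩
  intro y
  obtain ⟨x, hx⟩ := hqsurj y
  refine ⟨e (QuotientGroup.mk x), ?_⟩
  simp only [MonoidHom.comp_apply, MulEquiv.coe_toMonoidHom, MulEquiv.symm_apply_apply]
  rw [hφ₀]
  rw [QuotientGroup.lift_mk']
  exact hx

end Stmt14AuxSection

theorem stmt14 {V : Type*} [Fintype V] (M : CoxeterMatrix V)
    (hinf : Infinite M.Group)
    (hout : (MulAut.conj : M.Group →* MulAut M.Group).range.FiniteIndex) :
    ∃ S : Set V, Infinite ↥(M.sp S) ∧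
      VirtuallySurjectsOnto (MulAut M.Group) ↥(M.sp S) := by
  obtain ⟨S, h1, H, h2, φ, h3⟩ := stmt14' M hinf hout
  exact ⟨S, h1, H, h2, φ, h3⟩
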